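/- (Coarse-grained diagonal formula, Eq. (B13)) Let n ≥ 1 and let ρ be a complex matrix on ℂ^{2^n} ⊗ ℂ^{2^n} (indexed by ((Fin n → Fin 2) × (Fin n → Fin 2)) pairs) such that for every subset T ⊆ Fin n, tr(π_T · ρ) = 1 / min(2^{|T|}, 2^{n − |T|}), where π_T is the partial swap defined entrywise by π_T (x,y) (x',y') = ∏_{k ∈ T} [x k = y' k]·[y k = x' k] · ∏_{k ∉ T} [x k = x' k]·[y k = y' k]. Then for every i with 0 ≤ i ≤ n, Σ_{s : Fin n → Fin 4, wt s = i} tr((E_s ⊗ E_sᴴ) · ρ) = Σ_{j=0}^{i} (n choose i) · (i choose j) · (−1)^{i−j} · 2^j / min(2^j, 2^{n−j}). -/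

import Mathlib

open Matrix Kronecker ComplexOrder

/-- The four Pauli matrices `σ₀, σ₁, σ₂, σ₃`. -/
def pauli : Fin 4 → Matrix (Fin 2) (Fin 2) ℂ :=
  ![!![1, 0; 0, 1], !![0, 1; 1, 0], !![0, -Complex.I; Complex.I, 0], !![1, 0; 0, -1]]

/-- The Pauli string `E_s`, `E_s x y = ∏_k (σ_{s k}) (x k) (y k)`. -/
def pauliString (n : ℕ) (s : Fin n → Fin 4) :
    Matrix (Fin n → Fin 2) (Fin n → Fin 2) ℂ :=
  Matrix.of fun x y => ∏ k, pauli (s k) (x k) (y k)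

/-- The weight of a Pauli label: the number of non-identity tensor factors. -/
def wt {n : ℕ} (s : Fin n → Fin 4) : ℕ :=
  (Finset.univ.filter fun k => s k ≠ 0).card

/-- The swap operator on `ℂ^{2^n} ⊗ ℂ^{2^n}`. -/
def swapN (n : ℕ) :
    Matrix ((Fin n → Fin 2) × (Fin n → Fin 2)) ((Fin n → Fin 2) × (Fin n → Fin 2)) ℂ :=
  Matrix.of fun p q => if p.1 = q.2 ∧ p.2 = q.1 then 1 else 0

/-- The partial swap `π_T` swapping the paired factors in `T` and acting as the
identity elsewhere. -/
def pSwap (n : ℕ) (T : Finset (Fin n)) :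
    Matrix ((Fin n → Fin 2) × (Fin n → Fin 2)) ((Fin n → Fin 2) × (Fin n → Fin 2)) ℂ :=
  Matrix.of fun p q =>
    ∏ k : Fin n,
      if k ∈ T then (if p.1 k = q.2 k ∧ p.2 k = q.1 k then 1 else 0)
      else (if p.1 k = q.1 k ∧ p.2 k = q.2 k then 1 else 0)

section Aux

open Finset

lemma pauli_sum_one (a b a' b' : Fin 2) :
    ∑ t ∈ ({1,2,3} : Finset (Fin 4)), pauli t a a' * star (pauli t b' b) =
      2 * ((if a = b' then (1:ℂ) else 0) * if b = a' then 1 else 0)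
        - ((if a = a' then 1 else 0) * if b = b' then 1 else 0) := by
  rw [show ({1,2,3} : Finset (Fin 4)) = {1} ∪ {2} ∪ {3} by rfl]
  rw [Finset.sum_union (by decide), Finset.sum_union (by decide)]
  fin_cases a <;> fin_cases b <;> fin_cases a' <;> fin_cases b' <;>
    norm_num [pauli, Complex.ext_iff, Matrix.cons_val_two, Matrix.cons_val_three]

lemma pauli_zero (a b a' b' : Fin 2) :
    pauli 0 a a' * star (pauli 0 b' b) =
      ((if a = a' then (1:ℂ) else 0) * if b = b' then 1 else 0) := by
  fin_cases a <;> fin_cases b <;> fin_cases a' <;> fin_cases b' <;>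
    norm_num [pauli]

lemma mem123 : ∀ v : Fin 4, v ∈ ({1,2,3} : Finset (Fin 4)) ↔ v ≠ 0 := by decide

lemma filter_support_eq (n : ℕ) (T : Finset (Fin n)) :
    (Finset.univ.filter fun s : Fin n → Fin 4 => Finset.univ.filter (fun k => s k ≠ 0) = T)
      = Fintype.piFinset (fun k => if k ∈ T then ({1,2,3} : Finset (Fin 4)) else {0}) := by
  ext s
  simp only [Finset.mem_filter, Finset.mem_univ, true_and, Fintype.mem_piFinset,
    Finset.ext_iff, Finset.mem_filter, Finset.mem_univ, true_and]
  refine forall_congr' fun k => ?_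
  by_cases hk : k ∈ T
  · rw [if_pos hk, mem123]; simp [hk]
  · rw [if_neg hk]; simp [hk]

lemma pSwap_apply (n : ℕ) (S : Finset (Fin n)) (p q : (Fin n → Fin 2) × (Fin n → Fin 2)) :
    pSwap n S p q =
      (∏ k ∈ S, ((if p.1 k = q.2 k then (1:ℂ) else 0) * if p.2 k = q.1 k then 1 else 0)) *
      ∏ k ∈ Sᶜ, ((if p.1 k = q.1 k then (1:ℂ) else 0) * if p.2 k = q.2 k then 1 else 0) := by
  rw [pSwap, Matrix.of_apply, ← Finset.prod_mul_prod_compl S]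
  congr 1
  · exact Finset.prod_congr rfl fun k hk => by
      rw [if_pos hk]; by_cases h1 : p.1 k = q.2 k <;> by_cases h2 : p.2 k = q.1 k <;> simp [h1, h2]
  · refine Finset.prod_congr rfl fun k hk => ?_
    rw [if_neg (Finset.mem_compl.mp hk)]
    by_cases h1 : p.1 k = q.1 k <;> by_cases h2 : p.2 k = q.2 k <;> simp [h1, h2]

lemma entry_sum (n i : ℕ) (p q : (Fin n → Fin 2) × (Fin n → Fin 2)) :
    ∑ s ∈ Finset.univ.filter (fun s : Fin n → Fin 4 => wt s = i),
        (pauliString n s ⊗ₖ (pauliString n s)ᴴ) p q =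
    ∑ T ∈ Finset.powersetCard i (Finset.univ : Finset (Fin n)), ∑ S ∈ T.powerset,
        (2:ℂ)^S.card * (-1:ℂ)^(i - S.card) * pSwap n S p q := by
  set sw : Fin n → ℂ := fun k => (if p.1 k = q.2 k then (1:ℂ) else 0) * if p.2 k = q.1 k then 1 else 0 with hsw
  set idt : Fin n → ℂ := fun k => (if p.1 k = q.1 k then (1:ℂ) else 0) * if p.2 k = q.2 k then 1 else 0 with hidt
  have hentry : ∀ s : Fin n → Fin 4,
      (pauliString n s ⊗ₖ (pauliString n s)ᴴ) p q =
        ∏ k, pauli (s k) (p.1 k) (q.1 k) * star (pauli (s k) (q.2 k) (p.2 k)) := by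
    intro s
    simp [Matrix.kroneckerMap_apply, pauliString, Matrix.conjTranspose_apply, Finset.prod_mul_distrib]
  simp only [hentry]
  rw [← Finset.sum_fiberwise_of_maps_to (g := fun s : Fin n → Fin 4 => Finset.univ.filter (fun k => s k ≠ 0))
    (t := Finset.powersetCard i (Finset.univ : Finset (Fin n)))
    (fun s hs => by simpa [Finset.mem_powersetCard_univ, wt] using (Finset.mem_filter.mp hs).2)]
  refine Finset.sum_congr rfl fun T hT => ?_
  have hTcard : T.card = i := Finset.mem_powersetCard_univ.mp hT
  have hfil : (Finset.univ.filter (fun s : Fin n → Fin 4 => wt s = i)).filter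
      (fun s => Finset.univ.filter (fun k => s k ≠ 0) = T) =
      Finset.univ.filter (fun s : Fin n → Fin 4 => Finset.univ.filter (fun k => s k ≠ 0) = T) := by
    ext s
    simp only [Finset.mem_filter, Finset.mem_univ, true_and, wt]
    constructor
    · rintro ⟨-, h⟩; exact h
    · intro h; exact ⟨by simp [wt, h, hTcard], h⟩
  rw [hfil, filter_support_eq]
  rw [← Finset.prod_univ_sum (fun k => if k ∈ T then ({1,2,3} : Finset (Fin 4)) else {0})
    (fun k a => pauli a (p.1 k) (q.1 k) * star (pauli a (q.2 k) (p.2 k)))]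
  have hprod : ∀ k : Fin n, (∑ a ∈ (if k ∈ T then ({1,2,3} : Finset (Fin 4)) else {0}),
      pauli a (p.1 k) (q.1 k) * star (pauli a (q.2 k) (p.2 k))) =
      if k ∈ T then 2 * sw k - idt k else idt k := by
    intro k
    by_cases hk : k ∈ T
    · rw [if_pos hk, if_pos hk, pauli_sum_one]
    · rw [if_neg hk, if_neg hk, Finset.sum_singleton, pauli_zero]
  simp only [hprod]
  rw [← Finset.prod_mul_prod_compl T]
  rw [Finset.prod_congr rfl (fun k hk => if_pos hk),
    Finset.prod_congr (rfl : Tᶜ = Tᶜ) (fun k hk => if_neg (Finset.mem_compl.mp hk))]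
  have : (∏ k ∈ T, (2 * sw k - idt k)) =
      ∑ S ∈ T.powerset, (∏ k ∈ S, 2 * sw k) * ∏ k ∈ T \ S, -idt k := by
    rw [← Finset.prod_add]
    exact Finset.prod_congr rfl fun k _ => by ring
  rw [this, Finset.sum_mul]
  refine Finset.sum_congr rfl fun S hS => ?_
  have hST : S ⊆ T := Finset.mem_powerset.mp hS
  rw [pSwap_apply]
  have h1 : (∏ k ∈ S, 2 * sw k) = 2 ^ S.card * ∏ k ∈ S, sw k := by
    rw [Finset.prod_mul_distrib, Finset.prod_const]
  have h2 : (∏ k ∈ T \ S, -idt k) = (-1:ℂ) ^ (i - S.card) * ∏ k ∈ T \ S, idt k := by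
    simp only [show ∀ k : Fin n, -idt k = (-1 : ℂ) * idt k from fun k => by ring]
    rw [Finset.prod_mul_distrib, Finset.prod_const, Finset.card_sdiff_of_subset hST, hTcard]
  have h3 : (∏ k ∈ T \ S, idt k) * ∏ k ∈ Tᶜ, idt k = ∏ k ∈ Sᶜ, idt k := by
    rw [← Finset.prod_union]
    · congr 1
      ext k
      simp only [Finset.mem_union, Finset.mem_sdiff, Finset.mem_compl]
      by_cases hk' : k ∈ S
      · simp [hk', hST hk']
      · simp [hk']; tauto
    · exact Finset.disjoint_left.mpr fun k hk hk' => (Finset.mem_compl.mp hk') (Finset.mem_sdiff.mp hk).1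
  rw [h1, h2]
  rw [show 2 ^ S.card * (∏ k ∈ S, sw k) * ((-1:ℂ) ^ (i - S.card) * ∏ k ∈ T \ S, idt k) * ∏ k ∈ Tᶜ, idt k
      = 2 ^ S.card * (-1:ℂ) ^ (i - S.card) * ((∏ k ∈ S, sw k) * ((∏ k ∈ T \ S, idt k) * ∏ k ∈ Tᶜ, idt k)) by ring,
    h3]

end Aux

/-- Coarse-grained diagonal formula: if `tr(π_T ρ) = 1/min(2^{|T|}, 2^{n-|T|})` for
all `T`, then the weight-`i` Pauli correlations of `ρ` sum to
`Σ_j (n choose i)(i choose j)(-1)^{i-j} 2^j / min(2^j, 2^{n-j})`. -/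
theorem stmt17 (n : ℕ) (hn : 1 ≤ n)
    (ρ : Matrix ((Fin n → Fin 2) × (Fin n → Fin 2))
      ((Fin n → Fin 2) × (Fin n → Fin 2)) ℂ)
    (hswap : ∀ T : Finset (Fin n),
      (pSwap n T * ρ).trace = (((min (2 ^ T.card) (2 ^ (n - T.card)) : ℕ) : ℂ))⁻¹) :
    ∀ i ≤ n,
      ∑ s ∈ Finset.univ.filter (fun s : Fin n → Fin 4 => wt s = i),
          ((pauliString n s ⊗ₖ (pauliString n s)ᴴ) * ρ).trace =
        ∑ j ∈ Finset.range (i + 1),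
          (n.choose i : ℂ) * (i.choose j : ℂ) * (-1 : ℂ) ^ (i - j) * 2 ^ j /
            ((min (2 ^ j) (2 ^ (n - j)) : ℕ) : ℂ) := by

  intro i hi
  have M : (∑ s ∈ Finset.univ.filter (fun s : Fin n → Fin 4 => wt s = i),
        pauliString n s ⊗ₖ (pauliString n s)ᴴ) =
      ∑ T ∈ Finset.powersetCard i (Finset.univ : Finset (Fin n)), ∑ S ∈ T.powerset,
        ((2:ℂ)^S.card * (-1:ℂ)^(i - S.card)) • pSwap n S := by
    ext p q
    simp only [Matrix.sum_apply, Matrix.smul_apply, smul_eq_mul]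
    exact entry_sum n i p q
  calc
    ∑ s ∈ Finset.univ.filter (fun s : Fin n → Fin 4 => wt s = i),
        ((pauliString n s ⊗ₖ (pauliString n s)ᴴ) * ρ).trace
      = ((∑ s ∈ Finset.univ.filter (fun s : Fin n → Fin 4 => wt s = i),
          pauliString n s ⊗ₖ (pauliString n s)ᴴ) * ρ).trace := by
        rw [Finset.sum_mul, Matrix.trace_sum]
    _ = ∑ T ∈ Finset.powersetCard i (Finset.univ : Finset (Fin n)), ∑ S ∈ T.powerset,
          ((2:ℂ)^S.card * (-1:ℂ)^(i - S.card)) * (pSwap n S * ρ).trace := by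
        rw [M, Finset.sum_mul, Matrix.trace_sum]
        refine Finset.sum_congr rfl fun T _ => ?_
        rw [Finset.sum_mul, Matrix.trace_sum]
        exact Finset.sum_congr rfl fun S _ => by rw [smul_mul_assoc, Matrix.trace_smul, smul_eq_mul]
    _ = ∑ T ∈ Finset.powersetCard i (Finset.univ : Finset (Fin n)), ∑ S ∈ T.powerset,
          ((2:ℂ)^S.card * (-1:ℂ)^(i - S.card)) *
            (((min (2 ^ S.card) (2 ^ (n - S.card)) : ℕ) : ℂ))⁻¹ := by
        exact Finset.sum_congr rfl fun T _ => Finset.sum_congr rfl fun S _ => by rw [hswap]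
    _ = ∑ T ∈ Finset.powersetCard i (Finset.univ : Finset (Fin n)),
          ∑ j ∈ Finset.range (i + 1), (i.choose j) •
            ((2:ℂ)^j * (-1:ℂ)^(i - j) * (((min (2 ^ j) (2 ^ (n - j)) : ℕ) : ℂ))⁻¹) := by
        refine Finset.sum_congr rfl fun T hT => ?_
        have hTcard : T.card = i := Finset.mem_powersetCard_univ.mp hT
        rw [Finset.sum_powerset_apply_card
          (f := fun j => (2:ℂ)^j * (-1:ℂ)^(i - j) * (((min (2 ^ j) (2 ^ (n - j)) : ℕ) : ℂ))⁻¹),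
          hTcard]
    _ = ∑ j ∈ Finset.range (i + 1),
          (n.choose i : ℂ) * (i.choose j : ℂ) * (-1 : ℂ) ^ (i - j) * 2 ^ j /
            ((min (2 ^ j) (2 ^ (n - j)) : ℕ) : ℂ) := by
        rw [Finset.sum_const, Finset.card_powersetCard, Finset.card_univ, Fintype.card_fin,
          Finset.smul_sum]
        refine Finset.sum_congr rfl fun j _ => ?_
        simp only [nsmul_eq_mul]
        rw [div_eq_mul_inv]
        ring
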